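/- Let I ⊆ ℝ be an open interval, let α ∈ ℂ, and let q, r : I → ℂ be C² functions with q nonvanishing, satisfying on I the similarity conditions 2t·q + q″/2 − 2q²r′ − 4q³r² = 0 and 2t·qr + (q″r + qr″ − q′r′)/2 − 4q³r³ = −α. Define y := −q′/(2q) and z := −q·r′ − 2q²r². Then y and z are differentiable on I and satisfy y′ = 2y² + 2z + 2t and z′ = −4yz + 2α; equivalently, in the variable s = 2t, they satisfy the second Painlevé Hamiltonian system dy/ds = y² + z + s/2 and dz/ds = −2yz + α. -/

import Mathlib

theorem PII_from_similarity
    (I : Set ℝ) (hI : IsOpen I) (α : ℂ)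
    (q r : ℝ → ℂ)
    (hq : ContDiffOn ℝ 2 q I) (hr : ContDiffOn ℝ 2 r I)
    (hq0 : ∀ t ∈ I, q t ≠ 0)
    (hsim1 : ∀ t ∈ I,
      2 * (t : ℂ) * q t + deriv (deriv q) t / 2
        - 2 * (q t) ^ 2 * deriv r t - 4 * (q t) ^ 3 * (r t) ^ 2 = 0)
    (hsim2 : ∀ t ∈ I,
      2 * (t : ℂ) * q t * r t
        + (deriv (deriv q) t * r t + q t * deriv (deriv r) t
            - deriv q t * deriv r t) / 2
        - 4 * (q t) ^ 3 * (r t) ^ 3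
      = -α)
    (y z : ℝ → ℂ)
    (hy : y = fun (t : ℝ) => -deriv q t / (2 * q t))
    (hz : z = fun (t : ℝ) => -q t * deriv r t - 2 * (q t) ^ 2 * (r t) ^ 2) :
    DifferentiableOn ℝ y I ∧ DifferentiableOn ℝ z I ∧
    (∀ t ∈ I,
      deriv y t = 2 * (y t) ^ 2 + 2 * z t + 2 * (t : ℂ) ∧
      deriv z t = -4 * y t * z t + 2 * α) ∧
    (∀ s : ℝ, s / 2 ∈ I →
      deriv (fun (u : ℝ) => y (u / 2)) s
        = (y (s / 2)) ^ 2 + z (s / 2) + (s : ℂ) / 2 ∧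
      deriv (fun (u : ℝ) => z (u / 2)) s
        = -2 * y (s / 2) * z (s / 2) + α) := by
  have hq' : ContDiffOn ℝ 1 (deriv q) I := hq.deriv_of_isOpen hI (by norm_num)
  have hr' : ContDiffOn ℝ 1 (deriv r) I := hr.deriv_of_isOpen hI (by norm_num)
  have key : ∀ t ∈ I,
      HasDerivAt y (2 * (y t) ^ 2 + 2 * z t + 2 * (t : ℂ)) t ∧
      HasDerivAt z (-4 * y t * z t + 2 * α) t := by
    intro t ht
    have hmem := hI.mem_nhds ht
    have hqt : HasDerivAt q (deriv q t) t :=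
      ((hq.contDiffAt hmem).differentiableAt (by norm_num)).hasDerivAt
    have hrt : HasDerivAt r (deriv r t) t :=
      ((hr.contDiffAt hmem).differentiableAt (by norm_num)).hasDerivAt
    have hqt2 : HasDerivAt (deriv q) (deriv (deriv q) t) t :=
      ((hq'.contDiffAt hmem).differentiableAt (by norm_num)).hasDerivAt
    have hrt2 : HasDerivAt (deriv r) (deriv (deriv r) t) t :=
      ((hr'.contDiffAt hmem).differentiableAt (by norm_num)).hasDerivAt
    set a := q t
    set b := deriv q t
    set c := deriv (deriv q) t
    set u := r t
    set v := deriv r t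
    set w := deriv (deriv r) t
    have ha : a ≠ 0 := hq0 t ht
    have h2a : (2 : ℂ) * a ≠ 0 := by simp [ha]
    have h1 := hsim1 t ht
    have h2 := hsim2 t ht
    constructor
    · have H : HasDerivAt y ((-c * (2 * a) - (-b) * (2 * b)) / (2 * a) ^ 2) t := by
        rw [hy]
        exact hqt2.neg.div (hqt.const_mul 2) h2a
      convert H using 1
      rw [hy, hz]
      have ha' : q t ≠ 0 := ha
      field_simp
      linear_combination (2 * a ^ 3) * h1
    · have Hq2 : HasDerivAt (fun x => q x ^ 2) (2 * a * b) t := by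
        rw [show (2 : ℂ) * a * b = b * a + a * b by ring]
        simpa only [← pow_two] using hqt.fun_mul hqt
      have Hr2 : HasDerivAt (fun x => r x ^ 2) (2 * u * v) t := by
        rw [show (2 : ℂ) * u * v = v * u + u * v by ring]
        simpa only [← pow_two] using hrt.fun_mul hrt
      have H := (hqt.fun_neg.fun_mul hrt2).fun_sub ((Hq2.const_mul 2).fun_mul Hr2)
      rw [hz]
      convert H using 1
      · rfl
      simp only [hy, hz]
      have ha' : q t ≠ 0 := ha
      field_simp
      linear_combination 4 * h2 - (4 * u) * h1
  refine ⟨?_, ?_, ?_, ?_⟩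
  · intro t ht; exact ((key t ht).1.differentiableAt).differentiableWithinAt
  · intro t ht; exact ((key t ht).2.differentiableAt).differentiableWithinAt
  · intro t ht; exact ⟨(key t ht).1.deriv, (key t ht).2.deriv⟩
  · intro s hs
    have hhalf : HasDerivAt (fun u : ℝ => u / 2) (1 / 2 : ℝ) s := by
      simpa using (hasDerivAt_id s).div_const 2
    obtain ⟨K1, K2⟩ := key _ hs
    have H1 : HasDerivAt (fun u : ℝ => y (u / 2))
        ((1 / 2 : ℝ) • (2 * (y (s / 2)) ^ 2 + 2 * z (s / 2) + 2 * ((s / 2 : ℝ) : ℂ))) s :=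
      K1.scomp s hhalf
    have H2 : HasDerivAt (fun u : ℝ => z (u / 2))
        ((1 / 2 : ℝ) • (-4 * y (s / 2) * z (s / 2) + 2 * α)) s :=
      K2.scomp s hhalf
    constructor
    · rw [H1.deriv, Complex.real_smul]
      push_cast
      ring
    · rw [H2.deriv, Complex.real_smul]
      push_cast
      ring
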